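/- Let K ∈ 𝓜_δ(dx), i.e., K(x,y) = Σ_{j≥0} α_j 2^j 𝟙_{(0,2^{−j}]}(δ(x,y)) with Σ|α_j| < ∞, partial sums Σ_{l≤j} α_l 2^l ≥ 0, Σ α_j = 1. Then the operator 𝒦f(x) = ∫_{[0,1)} K(x,y) f(y) dy satisfies 𝒦(𝟙_{[0,1)}) = 𝟙_{[0,1)}, and for each Haar function h supported on a dyadic interval of level j(h), 𝒦h = λ_h h with λ_h = Σ_{j ≥ j(h)} α_j. -/

import Mathlib

open Set MeasureTheory
open scoped ENNReal NNReal

/-- The dyadic distance on `[0,1)`. -/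
noncomputable def dyadicDist (x y : ℝ) : ℝ :=
  sInf {r : ℝ | ∃ j k : ℕ, r = (2 : ℝ)⁻¹ ^ j ∧
    x ∈ Set.Ico ((k : ℝ) / 2 ^ j) (((k : ℝ) + 1) / 2 ^ j) ∧
    y ∈ Set.Ico ((k : ℝ) / 2 ^ j) (((k : ℝ) + 1) / 2 ^ j)}

/-- The Haar function associated to the dyadic interval `I^j_k = [k2^{−j},(k+1)2^{−j})`. -/
noncomputable def haarFn (j k : ℕ) (x : ℝ) : ℝ :=
  (2 : ℝ) ^ ((j : ℝ) / 2) *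
    (Set.indicator (Set.Ico ((k : ℝ) / 2 ^ j) (((k : ℝ) + 1 / 2) / 2 ^ j)) (fun _ => (1 : ℝ)) x -
      Set.indicator (Set.Ico (((k : ℝ) + 1 / 2) / 2 ^ j) (((k : ℝ) + 1) / 2 ^ j))
        (fun _ => (1 : ℝ)) x)

noncomputable def Dint (j k : ℕ) : Set ℝ := Set.Ico ((k:ℝ)/2^j) (((k:ℝ)+1)/2^j)

lemma mem_Dint_iff {x : ℝ} (hx : 0 ≤ x) (j k : ℕ) : x ∈ Dint j k ↔ ⌊x * 2^j⌋₊ = k := by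
  rw [Nat.floor_eq_iff (by positivity), Dint, mem_Ico, div_le_iff₀ (by positivity),
    lt_div_iff₀ (by positivity)]

lemma floor_half {x : ℝ} (j : ℕ) : ⌊x * 2^j⌋₊ = ⌊x * 2^(j+1)⌋₊ / 2 := by
  rw [← Nat.floor_div_natCast]
  congr 1
  push_cast
  ring

lemma floor_scale {x : ℝ} (l n : ℕ) : ⌊x * 2^l⌋₊ = ⌊x * 2^(l+n)⌋₊ / 2^n := by
  induction n with
  | zero => simp
  | succ n ih =>
      rw [ih, floor_half (l+n), Nat.div_div_eq_div_mul]
      ring_nf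

lemma dyadicDist_spec {x y : ℝ} (hx : x ∈ Ico (0:ℝ) 1) (hy : y ∈ Ico (0:ℝ) 1) (hxy : x ≠ y) :
    0 < dyadicDist x y ∧ ∀ j : ℕ, (dyadicDist x y ≤ 2⁻¹ ^ j ↔ ⌊x * 2^j⌋₊ = ⌊y * 2^j⌋₊) := by
  set L : Set ℕ := {j | ⌊x * 2^j⌋₊ = ⌊y * 2^j⌋₊} with hL
  have h0 : 0 ∈ L := by
    simp only [hL, mem_setOf_eq, pow_zero, mul_one]
    rw [Nat.floor_eq_zero.mpr hx.2, Nat.floor_eq_zero.mpr hy.2]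
  have anti : ∀ j j', j ≤ j' → j' ∈ L → j ∈ L := by
    intro j j' hjj hj'
    have h1 := floor_scale (x := x) j (j' - j)
    have h2 := floor_scale (x := y) j (j' - j)
    rw [Nat.add_sub_cancel' hjj] at h1 h2
    simp only [hL, mem_setOf_eq] at hj' ⊢
    rw [h1, h2, hj']
  have hlt : ∀ j ∈ L, |x - y| < 2⁻¹ ^ j := by
    intro j hj
    simp only [hL, mem_setOf_eq] at hj
    have hxm : x ∈ Dint j ⌊x * 2^j⌋₊ := (mem_Dint_iff hx.1 _ _).mpr rfl
    have hym : y ∈ Dint j ⌊x * 2^j⌋₊ := (mem_Dint_iff hy.1 _ _).mpr hj.symm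
    rw [Dint, mem_Ico] at hxm hym
    have hlen : ((⌊x * 2^j⌋₊:ℝ)+1)/2^j - (⌊x * 2^j⌋₊:ℝ)/2^j = 2⁻¹ ^ j := by
      rw [div_sub_div_same, add_sub_cancel_left, one_div, ← inv_pow]
    rw [abs_sub_lt_iff]
    constructor <;> linarith [hxm.1, hxm.2, hym.1, hym.2]
  have hd : (0:ℝ) < |x - y| := abs_pos.mpr (sub_ne_zero.mpr hxy)
  obtain ⟨N, hN⟩ := exists_pow_lt_of_lt_one hd (by norm_num : (2:ℝ)⁻¹ < 1)
  have bdd : BddAbove L := by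
    refine ⟨N, fun j hj => ?_⟩
    by_contra hc
    push_neg at hc
    have : (2:ℝ)⁻¹ ^ j ≤ 2⁻¹ ^ N :=
      pow_le_pow_of_le_one (by norm_num) (by norm_num) hc.le
    linarith [hlt j hj]
  set J := sSup L with hJ
  have hJmem : J ∈ L := Nat.sSup_mem ⟨0, h0⟩ bdd
  have hiff : ∀ j, j ∈ L ↔ j ≤ J := fun j =>
    ⟨fun h => le_csSup bdd h, fun h => anti j J h hJmem⟩
  have hleast : IsLeast {r : ℝ | ∃ j k : ℕ, r = (2 : ℝ)⁻¹ ^ j ∧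
      x ∈ Set.Ico ((k : ℝ) / 2 ^ j) (((k : ℝ) + 1) / 2 ^ j) ∧
      y ∈ Set.Ico ((k : ℝ) / 2 ^ j) (((k : ℝ) + 1) / 2 ^ j)} ((2:ℝ)⁻¹ ^ J) := by
    constructor
    · exact ⟨J, ⌊x * 2^J⌋₊, rfl, (mem_Dint_iff hx.1 _ _).mpr rfl,
        (mem_Dint_iff hy.1 _ _).mpr hJmem.symm⟩
    · rintro r ⟨j, k, rfl, hxk, hyk⟩
      have hjL : j ∈ L := by
        have h1 := (mem_Dint_iff hx.1 j k).mp hxk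
        have h2 := (mem_Dint_iff hy.1 j k).mp hyk
        simp only [hL, mem_setOf_eq, h1, h2]
      exact pow_le_pow_of_le_one (by norm_num) (by norm_num) ((hiff j).mp hjL)
  have hdd : dyadicDist x y = (2:ℝ)⁻¹ ^ J := hleast.csInf_eq
  refine ⟨by rw [hdd]; positivity, fun j => ?_⟩
  rw [hdd]
  constructor
  · intro h
    have hjJ : j ≤ J := by
      by_contra hc
      push_neg at hc
      exact absurd h (not_le.mpr
        ((pow_lt_pow_iff_right_of_lt_one₀ (by norm_num) (by norm_num)).mpr hc))
    exact anti j J hjJ hJmem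
  · intro h
    exact pow_le_pow_of_le_one (by norm_num) (by norm_num) ((hiff j).mp h)

lemma indicator_dyadic {x y : ℝ} (hx : x ∈ Ico (0:ℝ) 1) (hy : y ∈ Ico (0:ℝ) 1)
    (hxy : y ≠ x) (j : ℕ) :
    (Set.Ioc (0:ℝ) ((2:ℝ)⁻¹ ^ j)).indicator (fun _ => (1:ℝ)) (dyadicDist x y)
      = (Dint j ⌊x * 2^j⌋₊).indicator (fun _ => (1:ℝ)) y := by
  obtain ⟨hpos, hiff⟩ := dyadicDist_spec hx hy (Ne.symm hxy)
  by_cases h : ⌊x * 2^j⌋₊ = ⌊y * 2^j⌋₊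
  · rw [Set.indicator_of_mem (Set.mem_Ioc.mpr ⟨hpos, (hiff j).mpr h⟩),
      Set.indicator_of_mem ((mem_Dint_iff hy.1 _ _).mpr h.symm)]
  · rw [Set.indicator_of_notMem (fun hmem => h ((hiff j).mp hmem.2)),
      Set.indicator_of_notMem (fun hmem => h (((mem_Dint_iff hy.1 _ _).mp hmem).symm))]

lemma floor_lt_pow {x : ℝ} (hx : x ∈ Ico (0:ℝ) 1) (l : ℕ) : ⌊x * 2^l⌋₊ < 2^l := by
  rw [Nat.floor_lt (mul_nonneg hx.1 (by positivity))]
  push_cast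
  nlinarith [hx.2, pow_pos (show (0:ℝ) < 2 by norm_num) l]

lemma Dint_subset {j k : ℕ} (hk : k < 2^j) : Dint j k ⊆ Ico 0 1 := by
  intro y hy
  rw [Dint, mem_Ico] at hy
  have h2 : (0:ℝ) < 2^j := by positivity
  have hk' : (k:ℝ) + 1 ≤ 2^j := by
    have : (k:ℝ) + 1 ≤ ((2^j : ℕ) : ℝ) := by exact_mod_cast hk
    simpa using this
  constructor
  · have : (0:ℝ) ≤ (k:ℝ)/2^j := by positivity
    linarith [hy.1]
  · calc y < ((k:ℝ)+1)/2^j := hy.2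
      _ ≤ 1 := by rw [div_le_one h2]; exact hk'

lemma volume_Dint (j k : ℕ) : volume (Dint j k) = ENNReal.ofReal ((2:ℝ)⁻¹ ^ j) := by
  rw [Dint, Real.volume_Ico]
  congr 1
  rw [div_sub_div_same, add_sub_cancel_left, one_div, ← inv_pow]

lemma Dint_measurable (j k : ℕ) : MeasurableSet (Dint j k) := measurableSet_Ico

lemma integral_K (α : ℕ → ℝ) (hα_abs : Summable (fun j => |α j|))
    (K : ℝ → ℝ → ℝ)
    (hK : ∀ x y, K x y =
      ∑' j : ℕ, α j * 2 ^ j *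
        Set.indicator (Set.Ioc (0 : ℝ) ((2 : ℝ)⁻¹ ^ j)) (fun _ => (1 : ℝ)) (dyadicDist x y))
    (f : ℝ → ℝ) (hf : Measurable f) (C : ℝ) (hC : ∀ y, |f y| ≤ C)
    {x : ℝ} (hx : x ∈ Ico (0:ℝ) 1) :
    ∫ y in Ico (0:ℝ) 1, K x y * f y
      = ∑' l : ℕ, α l * 2^l * ∫ y in Dint l ⌊x * 2^l⌋₊, f y := by
  have hC0 : 0 ≤ C := le_trans (abs_nonneg _) (hC 0)
  set μ := volume.restrict (Ico (0:ℝ) 1) with hμ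
  set g : ℕ → ℝ → ℝ :=
    fun l y => (Dint l ⌊x * 2^l⌋₊).indicator (fun y => α l * 2 ^ l * f y) y with hg
  have hne : ∀ᵐ y ∂μ, y ≠ x := by
    apply ae_restrict_of_ae
    rw [ae_iff]
    refine measure_mono_null (fun y hy => ?_) (measure_singleton x)
    simp only [mem_setOf_eq, not_not] at hy
    simp [hy]
  have step1 : ∫ y in Ico (0:ℝ) 1, K x y * f y = ∫ y, (∑' l, g l y) ∂μ := by
    refine integral_congr_ae ?_
    filter_upwards [ae_restrict_mem measurableSet_Ico, hne] with y hy hyx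
    rw [hK x y]
    have : (∑' l : ℕ, α l * 2 ^ l *
        Set.indicator (Set.Ioc (0 : ℝ) ((2 : ℝ)⁻¹ ^ l)) (fun _ => (1 : ℝ)) (dyadicDist x y))
        = ∑' l : ℕ, α l * 2 ^ l * (Dint l ⌊x * 2^l⌋₊).indicator (fun _ => (1:ℝ)) y := by
      exact tsum_congr fun l => by rw [indicator_dyadic hx hy hyx l]
    rw [this, ← tsum_mul_right]
    refine tsum_congr fun l => ?_
    by_cases hmem : y ∈ Dint l ⌊x * 2^l⌋₊
    · simp [hg, Set.indicator_of_mem hmem]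
    · simp [hg, Set.indicator_of_notMem hmem]
  have hmeas : ∀ l : ℕ, AEStronglyMeasurable (g l) μ :=
    fun l => ((hf.const_mul _).indicator (Dint_measurable _ _)).aestronglyMeasurable
  have hbound : ∑' l : ℕ, ∫⁻ y, ‖g l y‖₊ ∂μ ≠ ⊤ := by
    have hle : ∀ l : ℕ, ∫⁻ y, ‖g l y‖₊ ∂μ ≤ ENNReal.ofReal (|α l| * C) := by
      intro l
      have h1 : ∀ y, (‖g l y‖₊ : ℝ≥0∞)
          ≤ (Dint l ⌊x * 2^l⌋₊).indicator (fun _ => ENNReal.ofReal (|α l| * 2^l * C)) y := by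
        intro y
        by_cases hmem : y ∈ Dint l ⌊x * 2^l⌋₊
        · rw [hg]
          simp only [Set.indicator_of_mem hmem]
          rw [show ∀ r : ℝ, (‖r‖₊ : ℝ≥0∞) = ENNReal.ofReal |r| from fun r => Real.enorm_eq_ofReal_abs r]
          apply ENNReal.ofReal_le_ofReal
          rw [abs_mul, abs_mul, abs_pow, abs_two]
          have := hC y
          have := abs_nonneg (α l)
          have : (0:ℝ) ≤ |α l| * 2^l := by positivity
          nlinarith [abs_nonneg (f y), hC y, abs_nonneg (α l),
            pow_pos (show (0:ℝ)<2 by norm_num) l]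
        · simp [hg, Set.indicator_of_notMem hmem]
      calc ∫⁻ y, ‖g l y‖₊ ∂μ
          ≤ ∫⁻ y, (Dint l ⌊x * 2^l⌋₊).indicator
              (fun _ => ENNReal.ofReal (|α l| * 2^l * C)) y ∂μ := lintegral_mono h1
        _ = ENNReal.ofReal (|α l| * 2^l * C) * μ (Dint l ⌊x * 2^l⌋₊) := by
            rw [lintegral_indicator (Dint_measurable _ _)]
            simp
        _ ≤ ENNReal.ofReal (|α l| * 2^l * C) * volume (Dint l ⌊x * 2^l⌋₊) := by
            gcongr
            exact Measure.restrict_le_self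
        _ = ENNReal.ofReal (|α l| * C) := by
            rw [volume_Dint, ← ENNReal.ofReal_mul (by positivity)]
            congr 1
            rw [inv_pow]
            field_simp
    refine ne_top_of_le_ne_top ?_ (ENNReal.tsum_le_tsum hle)
    rw [← ENNReal.ofReal_tsum_of_nonneg (fun l => by positivity) (hα_abs.mul_right C)]
    exact ENNReal.ofReal_ne_top
  rw [step1, integral_tsum hmeas hbound]
  refine tsum_congr fun l => ?_
  rw [hg]
  rw [integral_indicator (Dint_measurable _ _), hμ, Measure.restrict_restrict (Dint_measurable _ _),
    inter_eq_self_of_subset_left (Dint_subset (floor_lt_pow hx l)),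
    integral_const_mul]

lemma haar_eq (j k : ℕ) (y : ℝ) :
    haarFn j k y = (2:ℝ) ^ ((j:ℝ)/2) *
      ((Dint (j+1) (2*k)).indicator (fun _ => (1:ℝ)) y
        - (Dint (j+1) (2*k+1)).indicator (fun _ => (1:ℝ)) y) := by
  have e1 : (k:ℝ)/2^j = ((2*k : ℕ):ℝ)/2^(j+1) := by push_cast; ring
  have e2 : ((k:ℝ) + 1/2)/2^j = (((2*k : ℕ):ℝ)+1)/2^(j+1) := by push_cast; ring
  have e2' : ((k:ℝ) + 1/2)/2^j = ((2*k+1 : ℕ):ℝ)/2^(j+1) := by push_cast; ring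
  have e3 : ((k:ℝ) + 1)/2^j = (((2*k+1 : ℕ):ℝ)+1)/2^(j+1) := by push_cast; ring
  rw [haarFn, Dint, Dint, e1, e3, ← e2, ← e2']

lemma Dint_nonneg {l m : ℕ} {y : ℝ} (hy : y ∈ Dint l m) : 0 ≤ y :=
  le_trans (by positivity) hy.1

lemma haar_bound (j k : ℕ) (y : ℝ) : |haarFn j k y| ≤ (2:ℝ) ^ ((j:ℝ)/2) := by
  rw [haarFn, abs_mul, abs_of_pos (by positivity : (0:ℝ) < 2 ^ ((j:ℝ)/2))]
  have h1 : |Set.indicator (Set.Ico ((k : ℝ) / 2 ^ j) (((k : ℝ) + 1 / 2) / 2 ^ j))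
      (fun _ => (1 : ℝ)) y - Set.indicator (Set.Ico (((k : ℝ) + 1 / 2) / 2 ^ j)
      (((k : ℝ) + 1) / 2 ^ j)) (fun _ => (1 : ℝ)) y| ≤ 1 := by
    rw [Set.indicator_apply, Set.indicator_apply]
    split <;> split <;> norm_num
  nlinarith [pow_pos (show (0:ℝ) < 2 by norm_num) j, Real.rpow_natCast (2:ℝ) j,
    abs_nonneg (Set.indicator (Set.Ico ((k : ℝ) / 2 ^ j) (((k : ℝ) + 1 / 2) / 2 ^ j))
      (fun _ => (1 : ℝ)) y - Set.indicator (Set.Ico (((k : ℝ) + 1 / 2) / 2 ^ j)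
      (((k : ℝ) + 1) / 2 ^ j)) (fun _ => (1 : ℝ)) y),
    mul_le_mul_of_nonneg_left h1 (le_of_lt (show (0:ℝ) < 2 ^ ((j:ℝ)/2) by positivity))]

lemma haar_measurable (j k : ℕ) : Measurable (haarFn j k) := by
  apply Measurable.const_mul
  exact ((measurable_const.indicator measurableSet_Ico).sub
    (measurable_const.indicator measurableSet_Ico))

lemma setIntegral_indicator_one {s : Set ℝ} (hs : MeasurableSet s) (D : Set ℝ) :
    ∫ y in D, s.indicator (fun _ => (1:ℝ)) y = (volume (s ∩ D)).toReal := by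
  rw [integral_indicator hs, setIntegral_const, measureReal_restrict_apply hs]
  simp [measureReal_def]

-- containment of dyadic intervals

lemma Dint_subset_Dint {j l n : ℕ} (hlj : l ≤ j) :
    Dint j n ⊆ Dint l (n / 2^(j-l)) := by
  intro y hy
  have hy0 : 0 ≤ y := Dint_nonneg hy
  rw [mem_Dint_iff hy0] at hy ⊢
  rw [← hy, floor_scale l (j - l), Nat.add_sub_cancel' hlj]

lemma Dint_disjoint {l m m' : ℕ} (h : m ≠ m') : Dint l m ∩ Dint l m' = ∅ := by
  ext y
  simp only [mem_inter_iff, mem_empty_iff_false, iff_false, not_and]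
  intro h1 h2
  exact h (((mem_Dint_iff (Dint_nonneg h1) l m).mp h1).symm.trans
    ((mem_Dint_iff (Dint_nonneg h1) l m').mp h2))

lemma integral_haar_low {j k l m : ℕ} (hlj : l ≤ j) :
    ∫ y in Dint l m, haarFn j k y = 0 := by
  have hsub1 : Dint (j+1) (2*k) ⊆ Dint l (k / 2^(j-l)) := by
    have := Dint_subset_Dint (j := j+1) (l := l) (n := 2*k) (le_trans hlj (Nat.le_succ j))
    have he : 2*k / 2^(j+1-l) = k / 2^(j-l) := by
      rw [show j + 1 - l = (j - l) + 1 by omega, pow_succ', Nat.mul_div_mul_left _ _ (by norm_num)]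
    rwa [he] at this
  have hsub2 : Dint (j+1) (2*k+1) ⊆ Dint l (k / 2^(j-l)) := by
    have := Dint_subset_Dint (j := j+1) (l := l) (n := 2*k+1) (le_trans hlj (Nat.le_succ j))
    have he : (2*k+1) / 2^(j+1-l) = k / 2^(j-l) := by
      rw [show j + 1 - l = (j - l) + 1 by omega, pow_succ', ← Nat.div_div_eq_div_mul]
      congr 1
      omega
    rwa [he] at this
  have hint : ∀ n : ℕ, ∫ y in Dint l m, (Dint (j+1) n).indicator (fun _ => (1:ℝ)) y
      = (volume (Dint (j+1) n ∩ Dint l m)).toReal :=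
    fun n => setIntegral_indicator_one (Dint_measurable _ _) _
  have key : ∀ n : ℕ, Dint (j+1) n ⊆ Dint l (k / 2^(j-l)) →
      volume (Dint (j+1) n ∩ Dint l m)
        = if m = k / 2^(j-l) then ENNReal.ofReal ((2:ℝ)⁻¹ ^ (j+1)) else 0 := by
    intro n hsub
    split
    · next h =>
        rw [h, inter_eq_self_of_subset_left hsub, volume_Dint]
    · next h =>
        refine measure_mono_null (fun y hy => ?_) (by simp :
          volume (∅ : Set ℝ) = 0)
        rw [← Dint_disjoint (Ne.symm h)]
        exact ⟨hsub hy.1, hy.2⟩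
  have hInt : ∀ n : ℕ, IntegrableOn
      (fun y => (Dint (j+1) n).indicator (fun _ => (1:ℝ)) y) (Dint l m) volume := by
    intro n
    rw [IntegrableOn, integrable_indicator_iff (Dint_measurable _ _)]
    refine integrableOn_const (ne_of_lt ?_)
    calc (volume.restrict (Dint l m)) (Dint (j+1) n) ≤ volume (Dint (j+1) n) :=
          Measure.restrict_le_self _
      _ < ⊤ := by rw [volume_Dint]; exact ENNReal.ofReal_lt_top
  calc ∫ y in Dint l m, haarFn j k y
      = ∫ y in Dint l m, (2:ℝ) ^ ((j:ℝ)/2) *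
        ((Dint (j+1) (2*k)).indicator (fun _ => (1:ℝ)) y
          - (Dint (j+1) (2*k+1)).indicator (fun _ => (1:ℝ)) y) := by
        refine setIntegral_congr_fun (Dint_measurable _ _) fun y _ => haar_eq j k y
    _ = (2:ℝ) ^ ((j:ℝ)/2) * ((∫ y in Dint l m, (Dint (j+1) (2*k)).indicator (fun _ => (1:ℝ)) y)
          - ∫ y in Dint l m, (Dint (j+1) (2*k+1)).indicator (fun _ => (1:ℝ)) y) := by
        rw [integral_const_mul, integral_sub (hInt _) (hInt _)]
    _ = 0 := by
        rw [hint, hint, key _ hsub1, key _ hsub2]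
        split <;> simp

lemma haar_floor_eq {j k : ℕ} {x y : ℝ} (hx : 0 ≤ x) (hy : 0 ≤ y)
    (h : ⌊y * 2^(j+1)⌋₊ = ⌊x * 2^(j+1)⌋₊) : haarFn j k y = haarFn j k x := by
  rw [haar_eq, haar_eq]
  have e : ∀ n : ℕ, (Dint (j+1) n).indicator (fun _ => (1:ℝ)) y
      = (Dint (j+1) n).indicator (fun _ => (1:ℝ)) x := by
    intro n
    classical
    rw [Set.indicator_apply, Set.indicator_apply]
    simp only [mem_Dint_iff hy, mem_Dint_iff hx, h]
  rw [e, e]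

lemma integral_haar_high {j k l : ℕ} (hlj : j + 1 ≤ l) {x : ℝ} (hx : 0 ≤ x) :
    ∫ y in Dint l ⌊x * 2^l⌋₊, haarFn j k y = haarFn j k x * 2⁻¹ ^ l := by
  have hcongr : ∀ y ∈ Dint l ⌊x * 2^l⌋₊, haarFn j k y = haarFn j k x := by
    intro y hy
    have hy0 : 0 ≤ y := Dint_nonneg hy
    refine haar_floor_eq hx hy0 ?_
    have hyf : ⌊y * 2^l⌋₊ = ⌊x * 2^l⌋₊ := (mem_Dint_iff hy0 _ _).mp hy
    have h1 := floor_scale (x := y) (j+1) (l - (j+1))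
    have h2 := floor_scale (x := x) (j+1) (l - (j+1))
    rw [Nat.add_sub_cancel' hlj] at h1 h2
    rw [h1, h2, hyf]
  rw [setIntegral_congr_fun (Dint_measurable _ _) hcongr, setIntegral_const,
    measureReal_def, volume_Dint, ENNReal.toReal_ofReal (by positivity), smul_eq_mul, mul_comm]


/-- The operator `𝒦f(x) = ∫ K(x,y) f(y) dy` for a dyadic Markov kernel `K ∈ 𝓜_δ(dx)` fixes
the constant `𝟙_{[0,1)}` and has each Haar function as an eigenfunction with eigenvalue
`λ_h = Σ_{i ≥ j(h)} α_i`, where `j(h) = j+1` is the scale of the halves of its support. -/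
theorem stmt14 (α : ℕ → ℝ) (hα_abs : Summable (fun j => |α j|))
    (hα_partial : ∀ j : ℕ, 0 ≤ ∑ l ∈ Finset.range (j + 1), α l * 2 ^ l)
    (hα_sum : ∑' j, α j = 1)
    (K : ℝ → ℝ → ℝ)
    (hK : ∀ x y, K x y =
      ∑' j : ℕ, α j * 2 ^ j *
        Set.indicator (Set.Ioc (0 : ℝ) ((2 : ℝ)⁻¹ ^ j)) (fun _ => (1 : ℝ)) (dyadicDist x y)) :
    (∀ x ∈ Ico (0 : ℝ) 1, ∫ y in Ico (0 : ℝ) 1, K x y * 1 = 1) ∧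
    (∀ j k : ℕ, k < 2 ^ j → ∀ x ∈ Ico (0 : ℝ) 1,
      ∫ y in Ico (0 : ℝ) 1, K x y * haarFn j k y =
        (∑' i : ℕ, if j + 1 ≤ i then α i else 0) * haarFn j k x) := by
  constructor
  · intro x hx
    have h := integral_K α hα_abs K hK (fun _ => (1:ℝ)) measurable_const 1
      (fun y => by norm_num) hx
    rw [h]
    have : ∀ l : ℕ, α l * 2^l * ∫ y in Dint l ⌊x * 2^l⌋₊, (fun _ => (1:ℝ)) y = α l := by
      intro l
      rw [setIntegral_const, measureReal_def, volume_Dint, ENNReal.toReal_ofReal (by positivity),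
        smul_eq_mul, mul_one, mul_assoc, ← mul_pow]
      norm_num
    rw [tsum_congr this, hα_sum]
  · intro j k hk x hx
    have h := integral_K α hα_abs K hK (haarFn j k) (haar_measurable j k)
      ((2:ℝ) ^ ((j:ℝ)/2)) (haar_bound j k) hx
    rw [h, ← tsum_mul_right]
    refine tsum_congr fun l => ?_
    by_cases hl : j + 1 ≤ l
    · rw [integral_haar_high hl hx.1, if_pos hl]
      have h2 : (2:ℝ)^l * 2⁻¹^l = 1 := by rw [← mul_pow]; norm_num
      calc α l * 2^l * (haarFn j k x * 2⁻¹^l) = α l * haarFn j k x * (2^l * 2⁻¹^l) := by ring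
        _ = α l * haarFn j k x := by rw [h2, mul_one]
    · rw [integral_haar_low (by omega : l ≤ j), if_neg hl]
      ring
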